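/- Let Φ ∈ S₂(E, E_*). The multiplication operators U_j given by multiplication by the coordinate functions Z_j (j = 1, 2) on the de Branges–Rovnyak model space ℋ (the operator range of [[I, Φ],[Φ*, I]]^{1/2} on L²(E_*) ⊕ L²(E)) are unitary. -/

import Mathlib

/- STATEMENT 3: Let Φ ∈ S₂(E, E_*).  The multiplication operators U_j by the coordinate
functions Z_j (j = 1,2) on the de Branges–Rovnyak model ℋ — the operator range of
S = [[I, Φ],[Φ*, I]]^{1/2} on L²(E_*) ⊕ L²(E) — are unitary.

L²(E_*), L²(E) are abstract Hilbert spaces; `MΦ` is multiplication by (the boundary values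
of) Φ, a contraction; `ZE`, `ZEs` are the (unitary) multiplications by a coordinate
function Z_j on L²(E) and L²(E_*), which commute with MΦ; `S` is the self-adjoint
nonnegative square root of the block operator [[I, MΦ],[MΦ*, I]] (hypothesis `hS2`), and
`U` acts componentwise by (f,g) ↦ (Z_j f, Z_j g).  The operator-range inner product of ℋ
is encoded by `ip`.  Conclusion: U maps ℋ = range S onto itself and preserves the ℋ inner
product, i.e. U is unitary on ℋ. -/

open scoped ComplexInnerProductSpace

noncomputable def pr {A B : Type*} [NormedAddCommGroup A] [NormedAddCommGroup B]
    (f : A) (g : B) : WithLp 2 (A × B) := (WithLp.equiv 2 (A × B)).symm (f, g)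


set_option maxHeartbeats 1000000 in
set_option synthInstance.maxHeartbeats 400000 in
/-- Auxiliary: a unitary conjugation fixing `S * S` fixes the nonnegative `S`. -/
lemma aux_comm_sqrt {H : Type*} [NormedAddCommGroup H] [InnerProductSpace ℂ H]
    [CompleteSpace H] (S U : H →L[ℂ] H) (hSnn : 0 ≤ S)
    (hWU : ContinuousLinearMap.adjoint U * U = 1) (hUW : U * ContinuousLinearMap.adjoint U = 1)
    (hUSsq : U * (S * S) = (S * S) * U) : U ∘L S = S ∘L U := by
  set W := ContinuousLinearMap.adjoint U with hW
  have hstar : star U = W := rfl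
  have hC : (0 : H →L[ℂ] H) ≤ U * S * star U := by
    rw [ContinuousLinearMap.nonneg_iff_isPositive]
    have h := ((ContinuousLinearMap.nonneg_iff_isPositive S).mp hSnn).conj_adjoint U
    have : U ∘L S ∘L ContinuousLinearMap.adjoint U = U * S * star U := by
      rw [hstar]; simp only [mul_assoc]; rfl
    rwa [this] at h
  have hCC : (U * S * star U) * (U * S * star U) = S * S := by
    rw [hstar]
    calc (U * S * W) * (U * S * W)
        = U * (S * ((W * U) * (S * W))) := by simp only [mul_assoc]
      _ = U * (S * S) * W := by rw [hWU, one_mul]; simp only [mul_assoc]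
      _ = (S * S) * U * W := by rw [hUSsq]
      _ = (S * S) * (U * W) := by simp only [mul_assoc]
      _ = S * S := by rw [hUW, mul_one]
  have e1 : CFC.sqrt (S * S) = S := CFC.sqrt_mul_self S hSnn
  have e2 : CFC.sqrt (S * S) = U * S * star U := CFC.sqrt_unique hCC hC
  have hUSU : U * S * star U = S := e2.symm.trans e1
  have : U * S * star U * U = S * U := congrArg (fun T => T * U) hUSU
  rw [hstar] at this
  calc U ∘L S = U * S := rfl
    _ = U * S * (W * U) := by rw [hWU, mul_one]
    _ = U * S * W * U := by simp only [mul_assoc]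
    _ = S * U := this
    _ = S ∘L U := rfl

set_option maxHeartbeats 1000000 in
set_option synthInstance.maxHeartbeats 400000 in
theorem stmt_3 {L2E L2Es : Type*}
    [NormedAddCommGroup L2E] [InnerProductSpace ℂ L2E] [CompleteSpace L2E]
    [NormedAddCommGroup L2Es] [InnerProductSpace ℂ L2Es] [CompleteSpace L2Es]
    (MΦ : L2E →L[ℂ] L2Es) (hMΦ : ‖MΦ‖ ≤ 1)
    (ZE : L2E →L[ℂ] L2E) (ZEs : L2Es →L[ℂ] L2Es)
    (hZE₁ : ContinuousLinearMap.adjoint ZE ∘L ZE = 1)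
    (hZE₂ : ZE ∘L ContinuousLinearMap.adjoint ZE = 1)
    (hZEs₁ : ContinuousLinearMap.adjoint ZEs ∘L ZEs = 1)
    (hZEs₂ : ZEs ∘L ContinuousLinearMap.adjoint ZEs = 1)
    (hcomm : ZEs ∘L MΦ = MΦ ∘L ZE)
    (S : WithLp 2 (L2Es × L2E) →L[ℂ] WithLp 2 (L2Es × L2E))
    (hS : IsSelfAdjoint S)
    (hSpos : ∀ x, 0 ≤ (⟪S x, x⟫).re)
    (hS2 : ∀ (f : L2Es) (g : L2E),
      S (S (pr f g)) = pr (f + MΦ g) (ContinuousLinearMap.adjoint MΦ f + g))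
    (U : WithLp 2 (L2Es × L2E) →L[ℂ] WithLp 2 (L2Es × L2E))
    (hU : ∀ (f : L2Es) (g : L2E), U (pr f g) = pr (ZEs f) (ZE g))
    (ip : WithLp 2 (L2Es × L2E) → WithLp 2 (L2Es × L2E) → ℂ)
    (hip : ∀ x y, x ∈ (LinearMap.ker S.toLinearMap)ᗮ → ip (S x) (S y) = ⟪x, y⟫) :
    (∀ x, ∃ y, U (S x) = S y) ∧ (∀ y, ∃ x, U (S x) = S y) ∧
      ∀ x y, ip (U (S x)) (U (S y)) = ip (S x) (S y) := by
  classical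
  have pZE1 : ∀ v, ContinuousLinearMap.adjoint ZE (ZE v) = v := fun v => by
    simpa using ContinuousLinearMap.ext_iff.mp hZE₁ v
  have pZE2 : ∀ v, ZE (ContinuousLinearMap.adjoint ZE v) = v := fun v => by
    simpa using ContinuousLinearMap.ext_iff.mp hZE₂ v
  have pZEs1 : ∀ v, ContinuousLinearMap.adjoint ZEs (ZEs v) = v := fun v => by
    simpa using ContinuousLinearMap.ext_iff.mp hZEs₁ v
  have pZEs2 : ∀ v, ZEs (ContinuousLinearMap.adjoint ZEs v) = v := fun v => by
    simpa using ContinuousLinearMap.ext_iff.mp hZEs₂ v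
  have pcomm : ∀ v, ZEs (MΦ v) = MΦ (ZE v) := fun v => by
    simpa using ContinuousLinearMap.ext_iff.mp hcomm v
  have innZE : ∀ g g' : L2E, ⟪ZE g, ZE g'⟫ = ⟪g, g'⟫ := fun g g' => by
    rw [← ContinuousLinearMap.adjoint_inner_right, pZE1]
  have innZEs : ∀ f f' : L2Es, ⟪ZEs f, ZEs f'⟫ = ⟪f, f'⟫ := fun f f' => by
    rw [← ContinuousLinearMap.adjoint_inner_right, pZEs1]
  have pcomm2 : ∀ v, ContinuousLinearMap.adjoint ZEs (MΦ v)
      = MΦ (ContinuousLinearMap.adjoint ZE v) := by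
    intro v
    conv_lhs => rw [← pZE2 v, ← pcomm, pZEs1]
  have pcomm' : ∀ f, ZE (ContinuousLinearMap.adjoint MΦ f)
      = ContinuousLinearMap.adjoint MΦ (ZEs f) := by
    intro f
    apply ext_inner_right ℂ
    intro v
    calc ⟪ZE (ContinuousLinearMap.adjoint MΦ f), v⟫
        = ⟪ContinuousLinearMap.adjoint MΦ f, ContinuousLinearMap.adjoint ZE v⟫ :=
          (ContinuousLinearMap.adjoint_inner_right ZE _ v).symm
      _ = ⟪f, MΦ (ContinuousLinearMap.adjoint ZE v)⟫ :=
          ContinuousLinearMap.adjoint_inner_left MΦ _ f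
      _ = ⟪f, ContinuousLinearMap.adjoint ZEs (MΦ v)⟫ := by rw [pcomm2]
      _ = ⟪ZEs f, MΦ v⟫ := ContinuousLinearMap.adjoint_inner_right ZEs f (MΦ v)
      _ = ⟪ContinuousLinearMap.adjoint MΦ (ZEs f), v⟫ :=
          (ContinuousLinearMap.adjoint_inner_left MΦ v (ZEs f)).symm
  have hUx : ∀ x : WithLp 2 (L2Es × L2E), U x = pr (ZEs x.ofLp.1) (ZE x.ofLp.2) := fun x => hU x.ofLp.1 x.ofLp.2
  have hUinn : ∀ x y, ⟪U x, U y⟫ = ⟪x, y⟫ := by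
    intro x y
    rw [hUx x, hUx y]
    show ⟪ZEs x.ofLp.1, ZEs y.ofLp.1⟫ + ⟪ZE x.ofLp.2, ZE y.ofLp.2⟫ = ⟪x.ofLp.1, y.ofLp.1⟫ + ⟪x.ofLp.2, y.ofLp.2⟫
    rw [innZE, innZEs]
  have hUS2 : ∀ x, U (S (S x)) = S (S (U x)) := by
    intro x
    have h1 : U (S (S x)) = U (S (S (pr x.ofLp.1 x.ofLp.2))) := rfl
    rw [h1, hS2, hU, hUx x, hS2]
    unfold pr
    apply congrArg
    refine Prod.ext ?_ ?_
    · show ZEs (x.ofLp.1 + MΦ x.ofLp.2) = ZEs x.ofLp.1 + MΦ (ZE x.ofLp.2)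
      rw [map_add, pcomm]
    · show ZE (ContinuousLinearMap.adjoint MΦ x.ofLp.1 + x.ofLp.2)
        = ContinuousLinearMap.adjoint MΦ (ZEs x.ofLp.1) + ZE x.ofLp.2
      rw [map_add, pcomm']
  set W := ContinuousLinearMap.adjoint U with hWdef
  have hWU : W ∘L U = 1 := by
    apply ContinuousLinearMap.ext
    intro x
    apply ext_inner_right ℂ
    intro y
    simp only [ContinuousLinearMap.comp_apply, ContinuousLinearMap.one_apply, hWdef,
      ContinuousLinearMap.adjoint_inner_left]
    exact hUinn x y
  have hUsurj : Function.Surjective U := by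
    intro z
    refine ⟨pr (ContinuousLinearMap.adjoint ZEs z.ofLp.1) (ContinuousLinearMap.adjoint ZE z.ofLp.2), ?_⟩
    rw [hU, pZEs2, pZE2]
    rfl
  have hUW : U ∘L W = 1 := by
    apply ContinuousLinearMap.ext
    intro x
    obtain ⟨z, rfl⟩ := hUsurj x
    have h : W (U z) = z := ContinuousLinearMap.ext_iff.mp hWU z
    simp only [ContinuousLinearMap.comp_apply, ContinuousLinearMap.one_apply, h]
  have hSnn : (0 : WithLp 2 (L2Es × L2E) →L[ℂ] WithLp 2 (L2Es × L2E)) ≤ S := by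
    rw [ContinuousLinearMap.nonneg_iff_isPositive]
    exact ⟨hS.isSymmetric, fun x => hSpos x⟩
  have hUSsq : U * (S * S) = (S * S) * U := by
    apply ContinuousLinearMap.ext
    intro x
    exact hUS2 x
  have hUS : U ∘L S = S ∘L U := aux_comm_sqrt S U hSnn hWU hUW hUSsq
  have hUSp : ∀ x, U (S x) = S (U x) := fun x => ContinuousLinearMap.ext_iff.mp hUS x
  refine ⟨fun x => ⟨U x, hUSp x⟩, ?_, ?_⟩
  · intro y
    refine ⟨W y, ?_⟩
    rw [hUSp, show U (W y) = y from ContinuousLinearMap.ext_iff.mp hUW y]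
  · intro x y
    haveI : CompleteSpace (LinearMap.ker S.toLinearMap) := (ContinuousLinearMap.isClosed_ker S).completeSpace_coe
    obtain ⟨k, hk, p, hp, hx⟩ :=
      Submodule.exists_add_mem_mem_orthogonal (K := LinearMap.ker S.toLinearMap) x
    have hSk : S k = 0 := LinearMap.mem_ker.mp hk
    have hSx : S x = S p := by rw [hx, map_add, hSk, zero_add]
    have hWker : ∀ m, m ∈ LinearMap.ker S.toLinearMap → W m ∈ LinearMap.ker S.toLinearMap := by
      intro m hm
      have hm0 : S m = 0 := LinearMap.mem_ker.mp hm
      have h1 : U (S (W m)) = 0 := by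
        rw [hUSp, show U (W m) = m from ContinuousLinearMap.ext_iff.mp hUW m, hm0]
      have h2 : W (U (S (W m))) = 0 := by rw [h1, map_zero]
      have h3 : W (U (S (W m))) = S (W m) :=
        ContinuousLinearMap.ext_iff.mp hWU (S (W m))
      rw [LinearMap.mem_ker, ContinuousLinearMap.coe_coe, ← h3, h2]
    have hUp : U p ∈ (LinearMap.ker S.toLinearMap)ᗮ := by
      rw [Submodule.mem_orthogonal]
      intro m hm
      have h4 : ⟪m, U p⟫ = ⟪W m, p⟫ := (ContinuousLinearMap.adjoint_inner_left U p m).symm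
      rw [h4]
      exact (Submodule.mem_orthogonal _ p).mp hp (W m) (hWker m hm)
    have hUSx : U (S x) = S (U p) := by
      rw [hUSp, hx, map_add, map_add]
      have h5 : S (U k) = 0 := by rw [← hUSp, hSk, map_zero]
      rw [h5, zero_add]
    rw [hUSx, hUSp y, hip (U p) (U y) hUp, hSx, hip p y hp, hUinn]
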